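/- (Andersen–Hoffman's Theorem) Let r ≤ n and let d = (d_1,…,d_n) be nonnegative integers with Σ_{ℓ∈[n]} d_ℓ = n−r. An r×r symmetric latin rectangle L on the symbol set [n] can be extended to an n×n symmetric latin square on [n] with prescribed diagonal tail d if and only if: (i) e_ℓ ≥ 2r−n+d_ℓ for every ℓ ∈ [n]; and (ii) e_ℓ + d_ℓ ≡ n (mod 2) for every ℓ ∈ [n]. -/

import Mathlib

open Finset

/-- Number of occurrences of the symbol `ℓ` in the `m × m` array `A` (symbols in `Fin k`). -/
def occ {m k : ℕ} (A : Fin m → Fin m → Fin k) (ℓ : Fin k) : ℕ :=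
  (Finset.univ.filter fun p : Fin m × Fin m => A p.1 p.2 = ℓ).card

/-- `A` is a symmetric latin square of order `n` on the symbol set `Fin n`:
each symbol occurs exactly once in each row and in each column, and `A` is symmetric. -/
def IsSymLS {n : ℕ} (A : Fin n → Fin n → Fin n) : Prop :=
  (∀ i, Function.Bijective (A i)) ∧
  (∀ j, Function.Bijective fun i => A i j) ∧
  (∀ i j, A i j = A j i)

/-- `L` is an `r × r` symmetric latin rectangle on the symbol set `Fin n`:
each symbol occurs at most once in each row and in each column, and `L` is symmetric. -/
def IsSymLatinRect {r n : ℕ} (L : Fin r → Fin r → Fin n) : Prop :=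
  (∀ i, Function.Injective (L i)) ∧
  (∀ j, Function.Injective fun i => L i j) ∧
  (∀ i j, L i j = L j i)

/-- `A` extends `L`: `L` is the top-left `r × r` subarray of `A`. -/
def Extends {r n : ℕ} (h : r ≤ n) (L : Fin r → Fin r → Fin n)
    (A : Fin n → Fin n → Fin n) : Prop :=
  ∀ i j : Fin r, A (Fin.castLE h i) (Fin.castLE h j) = L i j

/-- The number of diagonal cells `A i i` with `i` beyond the first `r` rows holding symbol `ℓ`. -/
def diagTail {n : ℕ} (r : ℕ) (A : Fin n → Fin n → Fin n) (ℓ : Fin n) : ℕ :=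
  (Finset.univ.filter fun i : Fin n => r ≤ (i : ℕ) ∧ A i i = ℓ).card


lemma card_filter_val_lt (n r : ℕ) (hrn : r ≤ n) :
    ((univ : Finset (Fin n)).filter fun i : Fin n => (i : ℕ) < r).card = r := by
  have h : ((univ : Finset (Fin n)).filter fun i : Fin n => (i : ℕ) < r)
      = Finset.map ⟨Fin.castLE hrn, Fin.castLE_injective hrn⟩ univ := by
    ext i
    simp only [Finset.mem_filter, Finset.mem_univ, true_and, Finset.mem_map,
      Function.Embedding.coeFn_mk]
    constructor
    · intro hi; exact ⟨⟨(i : ℕ), hi⟩, Fin.ext rfl⟩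
    · rintro ⟨j, rfl⟩; exact j.isLt
  rw [h, Finset.card_map, Finset.card_univ, Fintype.card_fin]

lemma card_filter_eq_one_of_bijective {n : ℕ} (f : Fin n → Fin n)
    (hf : Function.Bijective f) (ℓ : Fin n) :
    ((univ : Finset (Fin n)).filter fun j => f j = ℓ).card = 1 := by
  obtain ⟨j0, hj0⟩ := hf.2 ℓ
  rw [Finset.card_eq_one]
  refine ⟨j0, ?_⟩
  ext a
  simp only [Finset.mem_filter, Finset.mem_univ, true_and, Finset.mem_singleton]
  constructor
  · intro h; exact hf.1 (h.trans hj0.symm)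
  · rintro rfl; exact hj0

/-- Parity lemma: a symmetric set of pairs has the same parity as its diagonal. -/
lemma sym_pairs_mod_two {N : ℕ} (B : Fin N → Fin N → Prop)
    [∀ i j, Decidable (B i j)] (hsym : ∀ i j, B i j ↔ B j i) :
    ((univ : Finset (Fin N × Fin N)).filter fun p => B p.1 p.2).card % 2
      = ((univ : Finset (Fin N)).filter fun i => B i i).card % 2 := by
  set F := (univ : Finset (Fin N × Fin N)).filter fun p => B p.1 p.2 with hF
  have memF : ∀ p : Fin N × Fin N, p ∈ F ↔ B p.1 p.2 := by
    intro p; simp [hF]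
  have h1 : (F.filter fun p => p.1 = p.2).card + (F.filter fun p => ¬ p.1 = p.2).card
      = F.card := Finset.card_filter_add_card_filter_not _
  have h2 : ((F.filter fun p => ¬ p.1 = p.2).filter fun p => p.1 < p.2).card
      + ((F.filter fun p => ¬ p.1 = p.2).filter fun p => ¬ p.1 < p.2).card
      = (F.filter fun p => ¬ p.1 = p.2).card :=
    Finset.card_filter_add_card_filter_not _
  have hdiag : (F.filter fun p => p.1 = p.2).card
      = ((univ : Finset (Fin N)).filter fun i => B i i).card := by
    refine Finset.card_bij' (fun p _ => p.1) (fun i _ => (i, i)) ?hi ?hj ?left ?right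
    case hi =>
      intro a ha
      rw [Finset.mem_filter] at ha
      have hb : B a.1 a.2 := (memF a).mp ha.1
      rw [Finset.mem_filter]
      have hgoal : B a.1 a.1 := by rw [ha.2]; rwa [ha.2] at hb
      exact ⟨Finset.mem_univ _, hgoal⟩
    case hj =>
      intro a ha
      have hb : B a a := by simpa using ha
      exact Finset.mem_filter.mpr ⟨(memF _).mpr hb, rfl⟩
    case left =>
      intro a ha
      rw [Finset.mem_filter] at ha
      exact Prod.ext rfl ha.2
    case right => intro a ha; rfl
  have hswap : ((F.filter fun p => ¬ p.1 = p.2).filter fun p => p.1 < p.2).card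
      = ((F.filter fun p => ¬ p.1 = p.2).filter fun p => ¬ p.1 < p.2).card := by
    have mem2 : ∀ p : Fin N × Fin N, p ∈ (F.filter fun p => ¬ p.1 = p.2)
        ↔ B p.1 p.2 ∧ ¬ p.1 = p.2 := by
      intro p; rw [Finset.mem_filter, memF]
    refine Finset.card_bij' (fun p _ => (p.2, p.1)) (fun p _ => (p.2, p.1))
      ?hi ?hj ?left ?right
    case hi =>
      intro a ha
      rw [Finset.mem_filter] at ha
      obtain ⟨ha1, hlt⟩ := ha
      rw [mem2] at ha1
      rw [Finset.mem_filter, mem2]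
      exact ⟨⟨(hsym a.1 a.2).mp ha1.1, fun h => ha1.2 h.symm⟩,
        fun h => absurd (lt_trans hlt h) (lt_irrefl _)⟩
    case hj =>
      intro a ha
      rw [Finset.mem_filter] at ha
      obtain ⟨ha1, hnlt⟩ := ha
      rw [mem2] at ha1
      rw [Finset.mem_filter, mem2]
      refine ⟨⟨(hsym a.1 a.2).mp ha1.1, fun h => ha1.2 h.symm⟩, ?_⟩
      rcases lt_or_ge a.2 a.1 with h | h
      · exact h
      · exact absurd (lt_of_le_of_ne h ha1.2) hnlt
    case left => intro a _; rfl
    case right => intro a _; rfl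
  omega

/-- The set of symbols in column `j` of `L`. -/
def colSet {r n : ℕ} (L : Fin r → Fin r → Fin n) (j : Fin r) : Finset (Fin n) :=
  univ.image fun i => L i j

lemma mem_colSet {r n : ℕ} (L : Fin r → Fin r → Fin n) (j : Fin r) (ℓ : Fin n) :
    ℓ ∈ colSet L j ↔ ∃ i, L i j = ℓ := by
  simp [colSet]

lemma card_colSet {r n : ℕ} (L : Fin r → Fin r → Fin n)
    (hL : IsSymLatinRect L) (j : Fin r) : (colSet L j).card = r := by
  unfold colSet
  rw [Finset.card_image_of_injective _ (hL.2.1 j), Finset.card_univ, Fintype.card_fin]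

lemma occ_eq_card_cols {r n : ℕ} (L : Fin r → Fin r → Fin n)
    (hL : IsSymLatinRect L) (ℓ : Fin n) :
    occ L ℓ = (univ.filter fun j => ℓ ∈ colSet L j).card := by
  unfold occ
  apply Finset.card_nbij (fun p => p.2)
  · intro p hp
    rw [Finset.mem_coe, Finset.mem_filter] at hp ⊢
    exact ⟨Finset.mem_univ _, (mem_colSet L p.2 ℓ).mpr ⟨p.1, hp.2⟩⟩
  · intro p hp q hq hpq
    simp only [Finset.coe_filter, Set.mem_setOf_eq] at hp hq
    simp only at hpq
    have h1 : (fun i => L i p.2) p.1 = (fun i => L i p.2) q.1 := by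
      simp only
      rw [hp.2, hpq]
      exact hq.2.symm
    have := hL.2.1 p.2 h1
    exact Prod.ext this hpq
  · intro j hj
    simp only [Finset.coe_filter, Set.mem_setOf_eq] at hj
    obtain ⟨i, hi⟩ := (mem_colSet L j ℓ).mp hj.2
    exact ⟨(i, j), by simp [hi], rfl⟩

lemma card_cols_missing {r n : ℕ} (L : Fin r → Fin r → Fin n)
    (hL : IsSymLatinRect L) (ℓ : Fin n) :
    (univ.filter fun j => ℓ ∉ colSet L j).card + occ L ℓ = r := by
  rw [occ_eq_card_cols L hL ℓ]
  have h := Finset.card_filter_add_card_filter_not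
    (s := (univ : Finset (Fin r))) (p := fun j => ℓ ∈ colSet L j)
  rw [Finset.card_univ, Fintype.card_fin] at h
  omega

lemma filter_split_card {β : Type*} (G : Finset β) (p q : β → Prop)
    [DecidablePred p] [DecidablePred q] :
    (G.filter fun b => p b ∧ q b).card + (G.filter fun b => p b ∧ ¬ q b).card
      = (G.filter p).card := by
  rw [← Finset.filter_filter, ← Finset.filter_filter]
  exact Finset.card_filter_add_card_filter_not _

theorem necessity {n r : ℕ} (hrn : r ≤ n) (L : Fin r → Fin r → Fin n)
    (A : Fin n → Fin n → Fin n) (hA : IsSymLS A) (hext : Extends hrn L A) (ℓ : Fin n) :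
    2 * r + diagTail r A ℓ ≤ occ L ℓ + n ∧ (occ L ℓ + diagTail r A ℓ) % 2 = n % 2 := by
  obtain ⟨hrow, hcol, hsym⟩ := hA
  set F := (univ : Finset (Fin n × Fin n)).filter fun p => A p.1 p.2 = ℓ with hF
  have memF : ∀ p : Fin n × Fin n, p ∈ F ↔ A p.1 p.2 = ℓ := by intro p; simp [hF]
  -- each fiber over a fixed first coordinate has exactly one element
  have hfib : ∀ i : Fin n, (F.filter fun p => p.1 = i).card = 1 := by
    intro i
    have : (F.filter fun p => p.1 = i).card
        = ((univ : Finset (Fin n)).filter fun j => A i j = ℓ).card := by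
      refine Finset.card_bij' (fun p _ => p.2) (fun j _ => (i, j)) ?hi ?hj ?left ?right
      case hi =>
        intro a ha
        rw [Finset.mem_filter] at ha
        obtain ⟨ha1, ha2⟩ := ha
        rw [memF] at ha1
        rw [Finset.mem_filter]
        refine ⟨Finset.mem_univ _, ?_⟩
        show A i a.2 = ℓ
        rw [← ha2]; exact ha1
      case hj =>
        intro a ha
        rw [Finset.mem_filter] at ha
        rw [Finset.mem_filter, memF]
        exact ⟨ha.2, rfl⟩
      case left =>
        intro a ha
        rw [Finset.mem_filter] at ha
        exact Prod.ext ha.2.symm rfl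
      case right => intro a ha; rfl
    rw [this]
    exact card_filter_eq_one_of_bijective (A i) (hrow i) ℓ
  have htotal : F.card = n := by
    rw [Finset.card_eq_sum_card_fiberwise (f := Prod.fst) (t := univ)
      (fun x _ => Finset.mem_univ _)]
    rw [Finset.sum_congr rfl (fun i _ => hfib i), Finset.sum_const, smul_eq_mul, mul_one,
      Finset.card_univ, Fintype.card_fin]
  -- row count : pairs with first coordinate < r
  have hrowcount : (F.filter fun p => (p.1 : ℕ) < r).card = r := by
    rw [Finset.card_eq_sum_card_fiberwise (f := Prod.fst)
      (t := (univ : Finset (Fin n)).filter fun i : Fin n => (i : ℕ) < r)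
      (by intro x hx; rw [Finset.mem_coe, Finset.mem_filter] at hx ⊢; exact ⟨Finset.mem_univ _, hx.2⟩)]
    have heq : ∀ i ∈ (univ : Finset (Fin n)).filter fun i : Fin n => (i : ℕ) < r,
        ((F.filter fun p => (p.1 : ℕ) < r).filter fun p => p.1 = i).card = 1 := by
      intro i hi
      rw [Finset.mem_filter] at hi
      have : (F.filter fun p => (p.1 : ℕ) < r).filter (fun p => p.1 = i)
          = F.filter fun p => p.1 = i := by
        ext p
        simp only [Finset.mem_filter]
        constructor
        · rintro ⟨⟨h1, _⟩, h3⟩; exact ⟨h1, h3⟩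
        · rintro ⟨h1, h3⟩; exact ⟨⟨h1, by rw [h3]; exact hi.2⟩, h3⟩
      rw [this, hfib i]
    rw [Finset.sum_congr rfl heq, Finset.sum_const, smul_eq_mul, mul_one,
      card_filter_val_lt n r hrn]
  -- the swap bijection on blocks
  have hswap : (F.filter fun p => ¬ (p.1 : ℕ) < r ∧ (p.2 : ℕ) < r).card
      = (F.filter fun p => (p.1 : ℕ) < r ∧ ¬ (p.2 : ℕ) < r).card := by
    refine Finset.card_bij' (fun p _ => (p.2, p.1)) (fun p _ => (p.2, p.1)) ?hi ?hj ?left ?right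
    case hi =>
      intro a ha
      rw [Finset.mem_filter, memF] at ha ⊢
      exact ⟨by rw [hsym]; exact ha.1, ha.2.2, ha.2.1⟩
    case hj =>
      intro a ha
      rw [Finset.mem_filter, memF] at ha ⊢
      exact ⟨by rw [hsym]; exact ha.1, ha.2.2, ha.2.1⟩
    case left => intro a _; rfl
    case right => intro a _; rfl
  -- column count
  have hswap2 : (F.filter fun p => (p.2 : ℕ) < r).card
      = (F.filter fun p => (p.1 : ℕ) < r).card := by
    refine Finset.card_bij' (fun p _ => (p.2, p.1)) (fun p _ => (p.2, p.1)) ?hi ?hj ?left ?right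
    case hi =>
      intro a ha
      rw [Finset.mem_filter, memF] at ha ⊢
      exact ⟨by rw [hsym]; exact ha.1, ha.2⟩
    case hj =>
      intro a ha
      rw [Finset.mem_filter, memF] at ha ⊢
      exact ⟨by rw [hsym]; exact ha.1, ha.2⟩
    case left => intro a _; rfl
    case right => intro a _; rfl
  -- block splits
  have hsplitrow := filter_split_card F (fun p => (p.1 : ℕ) < r) (fun p => (p.2 : ℕ) < r)
  have hsplitrow' := filter_split_card F (fun p => ¬ (p.1 : ℕ) < r) (fun p => (p.2 : ℕ) < r)
  have hsplit1 : (F.filter fun p => (p.1 : ℕ) < r).card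
      + (F.filter fun p => ¬ (p.1 : ℕ) < r).card = F.card :=
    Finset.card_filter_add_card_filter_not _
  -- column split : c11 + c21 = r
  have hsplitcol : (F.filter fun p => (p.1 : ℕ) < r ∧ (p.2 : ℕ) < r).card
      + (F.filter fun p => ¬ (p.1 : ℕ) < r ∧ (p.2 : ℕ) < r).card
      = (F.filter fun p => (p.2 : ℕ) < r).card := by
    have h1 := filter_split_card F (fun p => (p.2 : ℕ) < r) (fun p => (p.1 : ℕ) < r)
    have e1 : F.filter (fun p => (p.2:ℕ) < r ∧ (p.1:ℕ) < r)
        = F.filter (fun p => (p.1:ℕ) < r ∧ (p.2:ℕ) < r) := by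
      apply Finset.filter_congr; intro p _; exact and_comm
    have e2 : F.filter (fun p => (p.2:ℕ) < r ∧ ¬ (p.1:ℕ) < r)
        = F.filter (fun p => ¬ (p.1:ℕ) < r ∧ (p.2:ℕ) < r) := by
      apply Finset.filter_congr; intro p _; exact and_comm
    rw [e1, e2] at h1
    exact h1
  -- diag tail is inside the bottom-right block
  have hdiag_le : diagTail r A ℓ
      ≤ (F.filter fun p => ¬ (p.1 : ℕ) < r ∧ ¬ (p.2 : ℕ) < r).card := by
    unfold diagTail
    apply Finset.card_le_card_of_injOn (fun i => (i, i))
    · intro a ha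
      rw [Finset.mem_coe, Finset.mem_filter] at ha
      obtain ⟨-, h1, h2⟩ := ha
      rw [Finset.mem_coe, Finset.mem_filter, memF]
      refine ⟨h2, ?_, ?_⟩ <;> · show ¬ (a : ℕ) < r; omega
    · intro a _ b _ hab
      exact congrArg Prod.fst hab
  -- occ L ℓ equals the top-left block count
  have hocc : occ L ℓ = (F.filter fun p => (p.1 : ℕ) < r ∧ (p.2 : ℕ) < r).card := by
    unfold occ
    apply Finset.card_nbij (fun p => (Fin.castLE hrn p.1, Fin.castLE hrn p.2))
    · intro p hp
      rw [Finset.mem_coe, Finset.mem_filter] at hp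
      rw [Finset.mem_coe, Finset.mem_filter, memF]
      refine ⟨?_, p.1.isLt, p.2.isLt⟩
      show A (Fin.castLE hrn p.1) (Fin.castLE hrn p.2) = ℓ
      rw [hext p.1 p.2]
      exact hp.2
    · intro p _ q _ hpq
      simp only [Prod.mk.injEq] at hpq
      exact Prod.ext (Fin.castLE_injective hrn hpq.1) (Fin.castLE_injective hrn hpq.2)
    · intro q hq
      simp only [Finset.coe_filter, Set.mem_setOf_eq] at hq
      obtain ⟨hq1, hq2, hq3⟩ := hq
      rw [memF] at hq1
      refine ⟨(⟨(q.1 : ℕ), hq2⟩, ⟨(q.2 : ℕ), hq3⟩), ?_, ?_⟩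
      · simp only [Finset.coe_filter, Set.mem_setOf_eq, Finset.mem_univ, true_and]
        have e1 : Fin.castLE hrn (⟨(q.1 : ℕ), hq2⟩ : Fin r) = q.1 := Fin.ext rfl
        have e2 : Fin.castLE hrn (⟨(q.2 : ℕ), hq3⟩ : Fin r) = q.2 := Fin.ext rfl
        rw [← hext, e1, e2]
        exact hq1
      · exact Prod.ext (Fin.ext rfl) (Fin.ext rfl)
  -- parity of bottom-right block
  have hp2 : (F.filter fun p => ¬ (p.1 : ℕ) < r ∧ ¬ (p.2 : ℕ) < r).card % 2
      = diagTail r A ℓ % 2 := by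
    have hB := sym_pairs_mod_two
      (fun i j : Fin n => A i j = ℓ ∧ (¬ (i : ℕ) < r ∧ ¬ (j : ℕ) < r))
      (fun i j => by
        show (A i j = ℓ ∧ (¬ (i : ℕ) < r ∧ ¬ (j : ℕ) < r))
          ↔ (A j i = ℓ ∧ (¬ (j : ℕ) < r ∧ ¬ (i : ℕ) < r))
        rw [hsym i j]
        tauto)
    have e1 : (univ : Finset (Fin n × Fin n)).filter
        (fun p => A p.1 p.2 = ℓ ∧ (¬ (p.1 : ℕ) < r ∧ ¬ (p.2 : ℕ) < r))
        = F.filter fun p => ¬ (p.1 : ℕ) < r ∧ ¬ (p.2 : ℕ) < r := by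
      rw [hF, Finset.filter_filter]
    have e2 : (univ : Finset (Fin n)).filter
        (fun i => A i i = ℓ ∧ (¬ (i : ℕ) < r ∧ ¬ (i : ℕ) < r))
        = (univ : Finset (Fin n)).filter fun i : Fin n => r ≤ (i : ℕ) ∧ A i i = ℓ := by
      apply Finset.filter_congr; intro i _
      constructor
      · rintro ⟨h1, h2, _⟩; exact ⟨by omega, h1⟩
      · rintro ⟨h1, h2⟩; exact ⟨h2, by omega, by omega⟩
    rw [e1, e2] at hB
    exact hB
  unfold diagTail at hdiag_le hp2 ⊢
  omega

lemma exists_row {n r : ℕ} (hrltn : r < n) (L : Fin r → Fin r → Fin n)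
    (hL : IsSymLatinRect L) (d : Fin n → ℕ) (hd : ∑ ℓ, d ℓ = n - r)
    (h1 : ∀ ℓ, 2 * r + d ℓ ≤ occ L ℓ + n)
    (s : Fin n) (hs : 1 ≤ d s) :
    ∃ x : Fin r → Fin n, Function.Injective x ∧ (∀ j, x j ≠ s) ∧
      (∀ j, x j ∉ colSet L j) ∧
      (∀ ℓ, ℓ ≠ s → occ L ℓ + n = 2 * r + d ℓ → ∃ j, x j = ℓ) := by
  classical
  have hcm : ∀ ℓ, (univ.filter fun j => ℓ ∉ colSet L j).card + occ L ℓ = r :=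
    card_cols_missing L hL
  have hcmle : ∀ ℓ, (univ.filter fun j => ℓ ∉ colSet L j).card + d ℓ ≤ n - r := by
    intro ℓ; have := hcm ℓ; have := h1 ℓ; omega
  set M : Finset (Fin n) :=
    (univ.erase s).filter fun ℓ => occ L ℓ + n = 2 * r + d ℓ with hM
  set allowed : Fin r → Finset (Fin n) :=
    (fun j => ((univ : Finset (Fin n)) \ colSet L j).erase s) with hallowed
  set dummyAllowed : Finset (Fin n) := (univ.erase s) \ M with hdummy
  have hmem_allowed : ∀ j ℓ, ℓ ∈ allowed j ↔ ℓ ≠ s ∧ ℓ ∉ colSet L j := by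
    intro j ℓ
    rw [hallowed]
    simp only [Finset.mem_erase, Finset.mem_sdiff, Finset.mem_univ, true_and]
  -- pointwise size of allowed sets
  have hpoint : ∀ j : Fin r,
      (allowed j).card + (if s ∉ colSet L j then 1 else 0) = n - r := by
    intro j
    have hbase : ((univ : Finset (Fin n)) \ colSet L j).card = n - r := by
      rw [Finset.card_sdiff_of_subset (Finset.subset_univ _), Finset.card_univ, Fintype.card_fin,
        card_colSet L hL j]
    by_cases hsj : s ∈ colSet L j
    · have : s ∉ (univ : Finset (Fin n)) \ colSet L j := by
        rw [Finset.mem_sdiff]; tauto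
      rw [hallowed]
      simp [Finset.erase_eq_of_notMem this, hbase, hsj]
    · have hmem : s ∈ (univ : Finset (Fin n)) \ colSet L j := by
        rw [Finset.mem_sdiff]; exact ⟨Finset.mem_univ _, hsj⟩
      rw [hallowed]
      simp only [Finset.card_erase_of_mem hmem, hbase, if_pos hsj]
      omega
  -- CLAIM 1 : Hall's condition for the columns
  have claim1 : ∀ S : Finset (Fin r), S.card ≤ (S.biUnion allowed).card := by
    intro S
    set N := S.biUnion allowed with hN
    have hE1 : (∑ j ∈ S, (allowed j).card)
        + (S.filter fun j => s ∉ colSet L j).card = S.card * (n - r) := by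
      have hsum : ∑ j ∈ S, ((allowed j).card + if s ∉ colSet L j then 1 else 0)
          = ∑ _j ∈ S, (n - r) := Finset.sum_congr rfl (fun j _ => hpoint j)
      rw [Finset.sum_add_distrib, Finset.sum_const, smul_eq_mul] at hsum
      rw [Finset.card_filter]
      exact hsum
    have hCS : (S.filter fun j => s ∉ colSet L j).card
        ≤ (univ.filter fun j => s ∉ colSet L j).card :=
      Finset.card_le_card (Finset.filter_subset_filter _ (Finset.subset_univ S))
    have hCSm : (univ.filter fun j => s ∉ colSet L j).card + 1 ≤ n - r := by
      have := hcmle s; omega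
    have hE2 : (∑ j ∈ S, (allowed j).card) ≤ N.card * (n - r) := by
      have hEa : ∀ j ∈ S, (allowed j).card
          = ∑ ℓ ∈ N, (if ℓ ∈ allowed j then 1 else 0) := by
        intro j hj
        rw [← Finset.card_filter, Finset.filter_mem_eq_inter,
          Finset.inter_eq_right.mpr (Finset.subset_biUnion_of_mem allowed hj)]
      rw [Finset.sum_congr rfl hEa, Finset.sum_comm]
      have hinner : ∀ ℓ ∈ N, (∑ j ∈ S, if ℓ ∈ allowed j then 1 else 0) ≤ n - r := by
        intro ℓ _
        rw [← Finset.card_filter]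
        have hsub : (S.filter fun j => ℓ ∈ allowed j)
            ⊆ univ.filter fun j => ℓ ∉ colSet L j := by
          intro j hj
          rw [Finset.mem_filter] at hj
          rw [Finset.mem_filter]
          exact ⟨Finset.mem_univ _, ((hmem_allowed j ℓ).mp hj.2).2⟩
        calc (S.filter fun j => ℓ ∈ allowed j).card
            ≤ (univ.filter fun j => ℓ ∉ colSet L j).card := Finset.card_le_card hsub
          _ ≤ n - r := by have := hcmle ℓ; omega
      calc ∑ ℓ ∈ N, ∑ j ∈ S, (if ℓ ∈ allowed j then 1 else 0)
          ≤ ∑ _ℓ ∈ N, (n - r) := Finset.sum_le_sum hinner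
        _ = N.card * (n - r) := by rw [Finset.sum_const, smul_eq_mul]
    -- combine
    have hlt : S.card * (n - r) < (N.card + 1) * (n - r) := by
      have hexp : (N.card + 1) * (n - r) = N.card * (n - r) + (n - r) := by ring
      omega
    have hpos : 0 < n - r := by omega
    have := (Nat.mul_lt_mul_right hpos).mp hlt
    omega
  -- CLAIM 2 : the mandatory symbols can be covered
  have claim2 : ∀ S : Finset (Fin r),
      (M \ S.biUnion allowed).card + S.card ≤ r := by
    intro S
    set P := M \ S.biUnion allowed with hP
    set U := (univ : Finset (Fin r)) \ S with hU
    have hPfact : ∀ ℓ ∈ P, ℓ ≠ s ∧ occ L ℓ + n = 2 * r + d ℓ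
        ∧ ∀ j ∈ S, ℓ ∈ colSet L j := by
      intro ℓ hℓ
      rw [hP, Finset.mem_sdiff] at hℓ
      obtain ⟨hℓM, hℓN⟩ := hℓ
      rw [hM, Finset.mem_filter, Finset.mem_erase] at hℓM
      refine ⟨hℓM.1.1, hℓM.2, ?_⟩
      intro j hj
      by_contra hcol
      exact hℓN (Finset.mem_biUnion.mpr ⟨j, hj, (hmem_allowed j ℓ).mpr ⟨hℓM.1.1, hcol⟩⟩)
    have hcount : ∀ ℓ ∈ P, (U.filter fun j => ℓ ∉ colSet L j)
        = (univ.filter fun j => ℓ ∉ colSet L j) := by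
      intro ℓ hℓ
      ext j
      simp only [Finset.mem_filter, hU, Finset.mem_sdiff, Finset.mem_univ, true_and]
      constructor
      · rintro ⟨_, h2⟩; exact h2
      · intro h2
        exact ⟨fun hjS => h2 ((hPfact ℓ hℓ).2.2 j hjS), h2⟩
    have hE2a : (∑ ℓ ∈ P, (U.filter fun j => ℓ ∉ colSet L j).card)
        + (∑ ℓ ∈ P, d ℓ) = P.card * (n - r) := by
      have hpt : ∀ ℓ ∈ P, (U.filter fun j => ℓ ∉ colSet L j).card + d ℓ = n - r := by
        intro ℓ hℓ
        rw [hcount ℓ hℓ]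
        have := hcm ℓ
        have := (hPfact ℓ hℓ).2.1
        omega
      have hsum : ∑ ℓ ∈ P, ((U.filter fun j => ℓ ∉ colSet L j).card + d ℓ)
          = ∑ _ℓ ∈ P, (n - r) := Finset.sum_congr rfl hpt
      rw [Finset.sum_add_distrib, Finset.sum_const, smul_eq_mul] at hsum
      exact hsum
    have hPd : (∑ ℓ ∈ P, d ℓ) + 1 ≤ n - r := by
      have hPsub : P ⊆ univ.erase s := by
        intro ℓ hℓ
        rw [Finset.mem_erase]
        exact ⟨(hPfact ℓ hℓ).1, Finset.mem_univ _⟩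
      have h2 : (∑ ℓ ∈ P, d ℓ) ≤ ∑ ℓ ∈ univ.erase s, d ℓ :=
        Finset.sum_le_sum_of_subset hPsub
      have h3 : d s + ∑ ℓ ∈ univ.erase s, d ℓ = ∑ ℓ, d ℓ :=
        Finset.add_sum_erase univ d (Finset.mem_univ s)
      omega
    have hE2b : (∑ ℓ ∈ P, (U.filter fun j => ℓ ∉ colSet L j).card)
        ≤ U.card * (n - r) := by
      have hswap : ∀ ℓ ∈ P, (U.filter fun j => ℓ ∉ colSet L j).card
          = ∑ j ∈ U, (if ℓ ∉ colSet L j then 1 else 0) := fun ℓ _ =>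
        Finset.card_filter _ _
      rw [Finset.sum_congr rfl hswap, Finset.sum_comm]
      have hinner : ∀ j ∈ U, (∑ ℓ ∈ P, if ℓ ∉ colSet L j then 1 else 0) ≤ n - r := by
        intro j _
        rw [← Finset.card_filter]
        have hsub : (P.filter fun ℓ => ℓ ∉ colSet L j)
            ⊆ (univ : Finset (Fin n)) \ colSet L j := by
          intro ℓ hℓ
          rw [Finset.mem_filter] at hℓ
          rw [Finset.mem_sdiff]
          exact ⟨Finset.mem_univ _, hℓ.2⟩
        calc (P.filter fun ℓ => ℓ ∉ colSet L j).card
            ≤ ((univ : Finset (Fin n)) \ colSet L j).card := Finset.card_le_card hsub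
          _ = n - r := by
            rw [Finset.card_sdiff_of_subset (Finset.subset_univ _), Finset.card_univ,
              Fintype.card_fin, card_colSet L hL j]
      calc ∑ j ∈ U, ∑ ℓ ∈ P, (if ℓ ∉ colSet L j then 1 else 0)
          ≤ ∑ _j ∈ U, (n - r) := Finset.sum_le_sum hinner
        _ = U.card * (n - r) := by rw [Finset.sum_const, smul_eq_mul]
    have hUcard : U.card + S.card = r := by
      rw [hU]
      rw [Finset.card_sdiff_add_card_eq_card (Finset.subset_univ S), Finset.card_univ,
        Fintype.card_fin]
    have hlt : P.card * (n - r) < (U.card + 1) * (n - r) := by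
      have hexp : (U.card + 1) * (n - r) = U.card * (n - r) + (n - r) := by ring
      omega
    have hpos : 0 < n - r := by omega
    have := (Nat.mul_lt_mul_right hpos).mp hlt
    omega
  -- set up the Hall system with dummy vertices
  set t := n - r - 1 with ht
  have htr : r + t + 1 = n := by omega
  set T : Fin r ⊕ Fin t → Finset (Fin n) :=
    Sum.elim allowed (fun _ => dummyAllowed) with hT
  have hall : ∀ s' : Finset (Fin r ⊕ Fin t), s'.card ≤ (s'.biUnion T).card := by
    intro s'
    set S := (univ : Finset (Fin r)).filter (fun j => Sum.inl j ∈ s') with hS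
    set D := (univ : Finset (Fin t)).filter (fun z => Sum.inr z ∈ s') with hD
    have hs'eq : s' = S.map ⟨Sum.inl, Sum.inl_injective⟩
        ∪ D.map ⟨Sum.inr, Sum.inr_injective⟩ := by
      ext z
      cases z with
      | inl a =>
        simp [hS, hD, Finset.mem_union, Finset.mem_map]
      | inr b =>
        simp [hS, hD, Finset.mem_union, Finset.mem_map]
    have hcardsplit : s'.card = S.card + D.card := by
      rw [hs'eq, Finset.card_union_of_disjoint, Finset.card_map, Finset.card_map]
      rw [Finset.disjoint_left]
      rintro a ha hb
      rw [Finset.mem_map] at ha hb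
      obtain ⟨a1, _, rfl⟩ := ha
      obtain ⟨b1, _, hb1⟩ := hb
      simp at hb1
    have hsubN : S.biUnion allowed ⊆ s'.biUnion T := by
      intro ℓ hℓ
      rw [Finset.mem_biUnion] at hℓ ⊢
      obtain ⟨j, hj, hℓj⟩ := hℓ
      rw [hS, Finset.mem_filter] at hj
      exact ⟨Sum.inl j, hj.2, hℓj⟩
    by_cases hDe : D = ∅
    · have : D.card = 0 := by rw [hDe]; rfl
      calc s'.card = S.card := by omega
        _ ≤ (S.biUnion allowed).card := claim1 S
        _ ≤ (s'.biUnion T).card := Finset.card_le_card hsubN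
    · obtain ⟨z, hz⟩ := Finset.nonempty_iff_ne_empty.mpr hDe
      rw [hD, Finset.mem_filter] at hz
      have hsubDum : dummyAllowed ⊆ s'.biUnion T := by
        intro ℓ hℓ
        rw [Finset.mem_biUnion]
        exact ⟨Sum.inr z, hz.2, hℓ⟩
      have hdisj : Disjoint dummyAllowed (M ∩ (S.biUnion allowed)) := by
        rw [Finset.disjoint_left]
        intro ℓ hℓ hℓ2
        rw [hdummy, Finset.mem_sdiff] at hℓ
        exact hℓ.2 (Finset.mem_inter.mp hℓ2).1
      have hunion_sub : dummyAllowed ∪ (M ∩ (S.biUnion allowed)) ⊆ s'.biUnion T :=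
        Finset.union_subset hsubDum
          (le_trans (Finset.inter_subset_right) hsubN)
      have hcard1 : (s'.biUnion T).card
          ≥ dummyAllowed.card + (M ∩ (S.biUnion allowed)).card := by
        rw [← Finset.card_union_of_disjoint hdisj]
        exact Finset.card_le_card hunion_sub
      have hMsub : M ⊆ univ.erase s := by rw [hM]; exact Finset.filter_subset _ _
      have hcard2 : dummyAllowed.card + M.card = (univ.erase s).card := by
        rw [hdummy]; exact Finset.card_sdiff_add_card_eq_card hMsub
      have hcard3 : (univ.erase s).card + 1 = n := by
        rw [Finset.card_erase_of_mem (Finset.mem_univ s), Finset.card_univ,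
          Fintype.card_fin]
        omega
      have hcard4 : (M \ (S.biUnion allowed)).card
          + (M ∩ (S.biUnion allowed)).card = M.card :=
        Finset.card_sdiff_add_card_inter M (S.biUnion allowed)
      have hcard5 := claim2 S
      have hcard6 : D.card ≤ t := by
        calc D.card ≤ (univ : Finset (Fin t)).card := Finset.card_le_card (Finset.subset_univ D)
          _ = t := by rw [Finset.card_univ, Fintype.card_fin]
      omega
  -- apply Hall's marriage theorem
  obtain ⟨f, hfinj, hfmem⟩ := (Finset.all_card_le_biUnion_card_iff_exists_injective T).mp hall
  refine ⟨fun j => f (Sum.inl j), ?_, ?_, ?_, ?_⟩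
  · intro a b hab
    have := hfinj hab
    exact Sum.inl_injective this
  · intro j
    have := hfmem (Sum.inl j)
    rw [hT] at this
    exact ((hmem_allowed j _).mp this).1
  · intro j
    have := hfmem (Sum.inl j)
    rw [hT] at this
    exact ((hmem_allowed j _).mp this).2
  · intro ℓ hℓne hℓtight
    have hℓM : ℓ ∈ M := by
      rw [hM, Finset.mem_filter, Finset.mem_erase]
      exact ⟨⟨hℓne, Finset.mem_univ _⟩, hℓtight⟩
    have himg : Finset.image f univ = univ.erase s := by
      apply Finset.eq_of_subset_of_card_le
      · intro y hy
        rw [Finset.mem_image] at hy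
        obtain ⟨z, _, rfl⟩ := hy
        have hz := hfmem z
        cases z with
        | inl j =>
          rw [hT] at hz
          rw [Finset.mem_erase]
          exact ⟨((hmem_allowed j _).mp hz).1, Finset.mem_univ _⟩
        | inr w =>
          rw [hT] at hz
          simp only [Sum.elim_inr] at hz
          rw [Finset.mem_sdiff] at hz
          exact hz.1
      · have h1 : (Finset.image f univ).card = r + t := by
          rw [Finset.card_image_of_injective _ hfinj, Finset.card_univ, Fintype.card_sum,
            Fintype.card_fin, Fintype.card_fin]
        have h2 : (univ.erase s).card + 1 = n := by
          rw [Finset.card_erase_of_mem (Finset.mem_univ s), Finset.card_univ,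
            Fintype.card_fin]
          omega
        omega
    have hℓmem : ℓ ∈ Finset.image f univ := by
      rw [himg, Finset.mem_erase]
      exact ⟨hℓne, Finset.mem_univ _⟩
    rw [Finset.mem_image] at hℓmem
    obtain ⟨z, _, hzℓ⟩ := hℓmem
    cases z with
    | inl j => exact ⟨j, hzℓ⟩
    | inr w =>
      exfalso
      have hz := hfmem (Sum.inr w)
      rw [hT] at hz
      simp only [Sum.elim_inr] at hz
      rw [Finset.mem_sdiff, hzℓ] at hz
      exact hz.2 hℓM

def extendRect {n r : ℕ} (L : Fin r → Fin r → Fin n) (x : Fin r → Fin n) (s : Fin n) :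
    Fin (r + 1) → Fin (r + 1) → Fin n := fun i j =>
  if hi : (i : ℕ) < r then
    if hj : (j : ℕ) < r then L ⟨i, hi⟩ ⟨j, hj⟩ else x ⟨i, hi⟩
  else if hj : (j : ℕ) < r then x ⟨j, hj⟩ else s

section ExtendRect

variable {n r : ℕ} (L : Fin r → Fin r → Fin n) (x : Fin r → Fin n) (s : Fin n)

lemma extendRect_cast (i j : Fin r) :
    extendRect L x s i.castSucc j.castSucc = L i j := by
  simp [extendRect]

lemma extendRect_cast_last (i : Fin r) :
    extendRect L x s i.castSucc (Fin.last r) = x i := by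
  simp [extendRect]

lemma extendRect_last_cast (j : Fin r) :
    extendRect L x s (Fin.last r) j.castSucc = x j := by
  simp [extendRect]

lemma extendRect_last_last : extendRect L x s (Fin.last r) (Fin.last r) = s := by
  simp [extendRect]

lemma fin_succ_split (c : Fin (r + 1)) :
    (∃ c' : Fin r, c = c'.castSucc) ∨ c = Fin.last r := by
  by_cases h : (c : ℕ) < r
  · exact Or.inl ⟨⟨(c : ℕ), h⟩, Fin.ext (by simp)⟩
  · refine Or.inr (Fin.ext ?_)
    have := c.isLt
    simp only [Fin.val_last]
    omega

lemma extendRect_symm (hL : IsSymLatinRect L) (i j : Fin (r + 1)) :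
    extendRect L x s i j = extendRect L x s j i := by
  simp only [extendRect]
  split_ifs <;> first | rfl | exact hL.2.2 _ _

lemma extendRect_isSymLatinRect (hL : IsSymLatinRect L)
    (hxinj : Function.Injective x) (hxs : ∀ j, x j ≠ s)
    (hxcol : ∀ j, x j ∉ colSet L j) :
    IsSymLatinRect (extendRect L x s) := by
  have hsym : ∀ i j, extendRect L x s i j = extendRect L x s j i :=
    extendRect_symm L x s hL
  have hrow : ∀ i, Function.Injective (extendRect L x s i) := by
    intro i a b hab
    rcases fin_succ_split i with ⟨i', rfl⟩ | rfl
    · rcases fin_succ_split a with ⟨a', rfl⟩ | rfl <;>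
        rcases fin_succ_split b with ⟨b', rfl⟩ | rfl
      · rw [extendRect_cast, extendRect_cast] at hab
        rw [hL.1 i' hab]
      · exfalso
        rw [extendRect_cast, extendRect_cast_last] at hab
        apply hxcol i'
        rw [mem_colSet]
        exact ⟨a', by rw [← hL.2.2 i' a', hab]⟩
      · exfalso
        rw [extendRect_cast_last, extendRect_cast] at hab
        apply hxcol i'
        rw [mem_colSet]
        exact ⟨b', by rw [← hL.2.2 i' b', hab]⟩
      · rfl
    · rcases fin_succ_split a with ⟨a', rfl⟩ | rfl <;>
        rcases fin_succ_split b with ⟨b', rfl⟩ | rfl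
      · rw [extendRect_last_cast, extendRect_last_cast] at hab
        rw [hxinj hab]
      · exfalso
        rw [extendRect_last_cast, extendRect_last_last] at hab
        exact hxs a' hab
      · exfalso
        rw [extendRect_last_last, extendRect_last_cast] at hab
        exact hxs b' hab.symm
      · rfl
  refine ⟨hrow, ?_, hsym⟩
  intro j
  have : (fun i => extendRect L x s i j) = extendRect L x s j := by
    funext i; exact hsym i j
  rw [this]
  exact hrow j

lemma occ_extendRect (ℓ : Fin n) :
    occ (extendRect L x s) ℓ
      = occ L ℓ + 2 * (univ.filter fun i => x i = ℓ).card
        + (if s = ℓ then 1 else 0) := by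
  have hexp : ∀ {N : ℕ} (B : Fin N → Fin N → Fin n),
      occ B ℓ = ∑ i : Fin N, ∑ j : Fin N, if B i j = ℓ then 1 else 0 := by
    intro N B
    unfold occ
    rw [← Finset.univ_product_univ, Finset.card_filter, Finset.sum_product]
  rw [hexp (extendRect L x s), hexp L]
  rw [Fin.sum_univ_castSucc
    (f := fun i => ∑ j : Fin (r+1), if extendRect L x s i j = ℓ then 1 else 0)]
  have inner1 : ∀ i : Fin r,
      (∑ j : Fin (r + 1), if extendRect L x s i.castSucc j = ℓ then 1 else 0)
        = (∑ j : Fin r, if L i j = ℓ then 1 else 0) + (if x i = ℓ then 1 else 0) := by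
    intro i
    rw [Fin.sum_univ_castSucc]
    congr 1
    · exact Finset.sum_congr rfl fun j _ => by rw [extendRect_cast]
    · rw [extendRect_cast_last]
  have inner2 : (∑ j : Fin (r + 1),
        if extendRect L x s (Fin.last r) j = ℓ then 1 else 0)
      = (∑ j : Fin r, if x j = ℓ then 1 else 0) + (if s = ℓ then 1 else 0) := by
    rw [Fin.sum_univ_castSucc]
    congr 1
    · exact Finset.sum_congr rfl fun j _ => by rw [extendRect_last_cast]
    · rw [extendRect_last_last]
  rw [Finset.sum_congr rfl (fun i _ => inner1 i), inner2, Finset.sum_add_distrib]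
  have hcnt : (univ.filter fun i => x i = ℓ).card
      = ∑ i : Fin r, if x i = ℓ then 1 else 0 := Finset.card_filter _ _
  rw [hcnt]
  ring

end ExtendRect

lemma diagTail_succ {n : ℕ} (r : ℕ) (hr : r < n) (A : Fin n → Fin n → Fin n) (ℓ : Fin n) :
    diagTail r A ℓ = diagTail (r + 1) A ℓ
      + (if A ⟨r, hr⟩ ⟨r, hr⟩ = ℓ then 1 else 0) := by
  unfold diagTail
  have hsplit := filter_split_card (univ : Finset (Fin n))
    (fun i => r ≤ (i : ℕ) ∧ A i i = ℓ) (fun i => r + 1 ≤ (i : ℕ))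
  have e1 : (univ.filter fun i : Fin n => (r ≤ (i : ℕ) ∧ A i i = ℓ) ∧ r + 1 ≤ (i : ℕ))
      = univ.filter fun i : Fin n => r + 1 ≤ (i : ℕ) ∧ A i i = ℓ := by
    apply Finset.filter_congr
    intro i _
    constructor
    · rintro ⟨⟨_, h2⟩, h3⟩; exact ⟨h3, h2⟩
    · rintro ⟨h3, h2⟩; exact ⟨⟨by omega, h2⟩, h3⟩
  have e2 : (univ.filter fun i : Fin n =>
        (r ≤ (i : ℕ) ∧ A i i = ℓ) ∧ ¬ (r + 1 ≤ (i : ℕ))).card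
      = if A ⟨r, hr⟩ ⟨r, hr⟩ = ℓ then 1 else 0 := by
    by_cases hA : A ⟨r, hr⟩ ⟨r, hr⟩ = ℓ
    · rw [if_pos hA, Finset.card_eq_one]
      refine ⟨⟨r, hr⟩, ?_⟩
      ext i
      simp only [Finset.mem_filter, Finset.mem_univ, true_and, Finset.mem_singleton]
      constructor
      · rintro ⟨⟨h1, h2⟩, h3⟩
        exact Fin.ext (show (i : ℕ) = r by omega)
      · rintro rfl
        exact ⟨⟨le_refl r, hA⟩, show ¬ r + 1 ≤ r by omega⟩
    · rw [if_neg hA, Finset.card_eq_zero, Finset.filter_eq_empty_iff]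
      rintro i _ ⟨⟨h1, h2⟩, h3⟩
      have hi : i = ⟨r, hr⟩ := Fin.ext (show (i : ℕ) = r by omega)
      rw [hi] at h2
      exact hA h2
  rw [e1] at hsplit
  omega

lemma suffAux (n : ℕ) : ∀ m r : ℕ, ∀ hrn : r ≤ n, n - r = m →
    ∀ L : Fin r → Fin r → Fin n, IsSymLatinRect L →
    ∀ d : Fin n → ℕ, (∑ ℓ, d ℓ = n - r) →
    (∀ ℓ, 2 * r + d ℓ ≤ occ L ℓ + n) →
    (∀ ℓ, (occ L ℓ + d ℓ) % 2 = n % 2) →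
    ∃ A : Fin n → Fin n → Fin n, IsSymLS A ∧ Extends hrn L A ∧
      ∀ ℓ, diagTail r A ℓ = d ℓ := by
  intro m
  induction m with
  | zero =>
    intro r hrn hm L hL d hd h1 h2
    have hreq : r = n := by omega
    subst hreq
    refine ⟨L, ⟨?_, ?_, hL.2.2⟩, ?_, ?_⟩
    · intro i; exact (Finite.injective_iff_bijective).mp (hL.1 i)
    · intro j; exact (Finite.injective_iff_bijective).mp (hL.2.1 j)
    · intro i j
      have e1 : Fin.castLE hrn i = i := Fin.ext rfl
      have e2 : Fin.castLE hrn j = j := Fin.ext rfl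
      rw [e1, e2]
    · intro ℓ
      have hz : d ℓ = 0 := by
        have hsum : ∑ ℓ', d ℓ' = 0 := by omega
        exact Finset.sum_eq_zero_iff.mp hsum ℓ (Finset.mem_univ _)
      rw [hz]
      unfold diagTail
      rw [Finset.card_eq_zero, Finset.filter_eq_empty_iff]
      rintro i _ ⟨hge, _⟩
      have := i.isLt
      omega
  | succ m ih =>
    intro r hrn hm L hL d hd h1 h2
    have hrltn : r < n := by omega
    have hrn1 : r + 1 ≤ n := by omega
    have hsum_ne : ∑ ℓ, d ℓ ≠ 0 := by omega
    obtain ⟨s, _, hs0⟩ := Finset.exists_ne_zero_of_sum_ne_zero hsum_ne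
    have hs : 1 ≤ d s := by omega
    obtain ⟨x, hxinj, hxs, hxcol, hxman⟩ := exists_row hrltn L hL d hd h1 s hs
    set L' := extendRect L x s with hL'def
    have hL' : IsSymLatinRect L' := extendRect_isSymLatinRect L x s hL hxinj hxs hxcol
    set d' : Fin n → ℕ := fun ℓ => if ℓ = s then d ℓ - 1 else d ℓ with hd'def
    have hd'val : ∀ ℓ, d ℓ = d' ℓ + (if ℓ = s then 1 else 0) := by
      intro ℓ
      by_cases h : ℓ = s
      · subst h; simp [hd'def]; omega
      · simp [hd'def, h]
    have hsum' : ∑ ℓ, d' ℓ = n - (r + 1) := by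
      have h3 : d s + ∑ ℓ ∈ univ.erase s, d ℓ = ∑ ℓ, d ℓ :=
        Finset.add_sum_erase univ d (Finset.mem_univ s)
      have h4 : d' s + ∑ ℓ ∈ univ.erase s, d' ℓ = ∑ ℓ, d' ℓ :=
        Finset.add_sum_erase univ d' (Finset.mem_univ s)
      have h5 : ∑ ℓ ∈ univ.erase s, d' ℓ = ∑ ℓ ∈ univ.erase s, d ℓ :=
        Finset.sum_congr rfl (fun ℓ hℓ => by
          rw [hd'def]; exact if_neg (Finset.mem_erase.mp hℓ).1)
      have h6 : d' s = d s - 1 := by rw [hd'def]; simp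
      omega
    have hocc' : ∀ ℓ, occ L' ℓ = occ L ℓ + 2 * (univ.filter fun i => x i = ℓ).card
        + (if s = ℓ then 1 else 0) := fun ℓ => occ_extendRect L x s ℓ
    have h1' : ∀ ℓ, 2 * (r + 1) + d' ℓ ≤ occ L' ℓ + n := by
      intro ℓ
      rw [hocc' ℓ]
      by_cases h : ℓ = s
      · subst h
        have := h1 ℓ
        simp only [hd'def, eq_self_iff_true, if_true]
        omega
      · have hns : s ≠ ℓ := fun hh => h hh.symm
        simp only [hd'def, if_neg h, if_neg hns]
        by_cases htight : occ L ℓ + n = 2 * r + d ℓ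
        · obtain ⟨j, hj⟩ := hxman ℓ h htight
          have hcnt : 1 ≤ (univ.filter fun i => x i = ℓ).card :=
            Finset.card_pos.mpr ⟨j, by rw [Finset.mem_filter]; exact ⟨Finset.mem_univ _, hj⟩⟩
          omega
        · have := h2 ℓ
          have := h1 ℓ
          omega
    have h2' : ∀ ℓ, (occ L' ℓ + d' ℓ) % 2 = n % 2 := by
      intro ℓ
      rw [hocc' ℓ]
      by_cases h : ℓ = s
      · subst h
        have := h2 ℓ
        simp only [hd'def, eq_self_iff_true, if_true]
        omega
      · have hns : s ≠ ℓ := fun hh => h hh.symm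
        simp only [hd'def, if_neg h, if_neg hns]
        have := h2 ℓ
        omega
    obtain ⟨A, hA, hextA, hdiagA⟩ := ih (r + 1) hrn1 (by omega) L' hL' d' hsum' h1' h2'
    refine ⟨A, hA, ?_, ?_⟩
    · intro i j
      rw [show Fin.castLE hrn i = Fin.castLE hrn1 i.castSucc from Fin.ext rfl,
        show Fin.castLE hrn j = Fin.castLE hrn1 j.castSucc from Fin.ext rfl,
        hextA i.castSucc j.castSucc, hL'def, extendRect_cast]
    · intro ℓ
      have hAs : A ⟨r, hrltn⟩ ⟨r, hrltn⟩ = s := by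
        have hlast := hextA (Fin.last r) (Fin.last r)
        have e : Fin.castLE hrn1 (Fin.last r) = ⟨r, hrltn⟩ := Fin.ext rfl
        rw [e] at hlast
        rw [hlast, hL'def]
        exact extendRect_last_last L x s
      rw [diagTail_succ r hrltn A ℓ, hdiagA ℓ, hAs, hd'val ℓ]
      by_cases h : ℓ = s
      · subst h; simp
      · rw [if_neg h, if_neg (fun hh : s = ℓ => h hh.symm)]

/-- Andersen–Hoffman's theorem. -/
theorem andersen_hoffman (n r : ℕ) (hrn : r ≤ n)
    (L : Fin r → Fin r → Fin n) (hL : IsSymLatinRect L)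
    (d : Fin n → ℕ) (hd : ∑ ℓ, d ℓ = n - r) :
    (∃ A : Fin n → Fin n → Fin n, IsSymLS A ∧ Extends hrn L A ∧
        ∀ ℓ, diagTail r A ℓ = d ℓ) ↔
      (∀ ℓ, 2 * r + d ℓ ≤ occ L ℓ + n) ∧
      (∀ ℓ, (occ L ℓ + d ℓ) % 2 = n % 2) := by
  constructor
  · rintro ⟨A, hA, hext, hdiag⟩
    constructor
    · intro ℓ
      have h := (necessity hrn L A hA hext ℓ).1
      rwa [hdiag ℓ] at h
    · intro ℓ
      have h := (necessity hrn L A hA hext ℓ).2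
      rwa [hdiag ℓ] at h
  · rintro ⟨h1, h2⟩
    exact suffAux n (n - r) r hrn rfl L hL d hd h1 h2
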